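/- Let Q be a finite-dimensional real vector space, H : [0,T] × Q × Q* → ℝ a C¹ Hamiltonian, q₀ ∈ Q, p₁ ∈ Q*, and (q,p) a C¹ curve with q(0) = q₀. Then the Type II d'Alembert variational principle — namely δS[q,p] = ⟨p₁, δq(T)⟩ for all C¹ partial variations (δq,δp) with δq(0) = 0, where S[q,p] = ∫₀ᵀ (⟨p, q̇⟩ − H(t,q,p)) dt — holds if and only if q̇ = D_p H, ṗ = −D_q H on (0,T) and p(T) = p₁. -/

import Mathlib

open Set

/-- The classical Hamiltonian phase space action
`S[q,p] = ∫₀ᵀ (⟨p(t), q̇(t)⟩ − H(t,q(t),p(t))) dt`. -/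
noncomputable def classicalAction (n : ℕ) (T : ℝ)
    (H : ℝ → (Fin n → ℝ) → (Fin n → ℝ) → ℝ) (q p : ℝ → (Fin n → ℝ)) : ℝ :=
  ∫ t in (0 : ℝ)..T, ((∑ i, p t i * deriv q t i) - H t (q t) (p t))

section AuxLemmas

open MeasureTheory intervalIntegral

/-- Derivative of a coordinate evaluation of a differentiable curve. -/
lemma aux_hasDerivAt_eval {n : ℕ} (f : ℝ → Fin n → ℝ) (hf : Differentiable ℝ f) (t : ℝ)
    (i : Fin n) : HasDerivAt (fun s => f s i) (deriv f t i) t :=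
  (ContinuousLinearMap.proj i : (Fin n → ℝ) →L[ℝ] ℝ).hasFDerivAt.comp_hasDerivAt t
    (hf t).hasDerivAt

/-- Scalar fundamental theorem of calculus for a product. -/
lemma aux_ftc_mul (T : ℝ) (ψ χ : ℝ → ℝ) (hψ : ContDiff ℝ 1 ψ) (hχ : ContDiff ℝ 1 χ) :
    ∫ t in (0:ℝ)..T, (deriv ψ t * χ t + ψ t * deriv χ t) = ψ T * χ T - ψ 0 * χ 0 := by
  refine intervalIntegral.integral_eq_sub_of_hasDerivAt (f := fun t => ψ t * χ t)
    (fun t _ => ?_) ?_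
  · exact ((hψ.differentiable one_ne_zero t).hasDerivAt.mul (hχ.differentiable one_ne_zero t).hasDerivAt)
  · exact (((hψ.continuous_deriv le_rfl).mul hχ.continuous).add
      (hψ.continuous.mul (hχ.continuous_deriv le_rfl))).intervalIntegrable _ _

/-- Vector fundamental theorem of calculus for a pairing. -/
lemma aux_ftc_pair {n : ℕ} (T : ℝ) (p δq : ℝ → Fin n → ℝ) (hp : ContDiff ℝ 1 p)
    (hδq : ContDiff ℝ 1 δq) :
    ∫ t in (0:ℝ)..T, (∑ i, (deriv p t i * δq t i + p t i * deriv δq t i))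
      = (∑ i, p T i * δq T i) - ∑ i, p 0 i * δq 0 i := by
  refine intervalIntegral.integral_eq_sub_of_hasDerivAt (f := fun t => ∑ i, p t i * δq t i)
    (fun t _ => ?_) ?_
  · exact HasDerivAt.fun_sum fun i _ =>
      (aux_hasDerivAt_eval p (hp.differentiable one_ne_zero) t i).mul
        (aux_hasDerivAt_eval δq (hδq.differentiable one_ne_zero) t i)
  · refine Continuous.intervalIntegrable ?_ _ _
    refine continuous_finset_sum _ fun i _ => Continuous.add ?_ ?_
    · exact ((continuous_apply i).comp (hp.continuous_deriv le_rfl)).mul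
        ((continuous_apply i).comp hδq.continuous)
    · exact ((continuous_apply i).comp hp.continuous).mul
        ((continuous_apply i).comp (hδq.continuous_deriv le_rfl))

lemma aux_fund_pos (T : ℝ) (hT : 0 < T) (f : ℝ → ℝ) (hf : Continuous f)
    (h : ∀ φ : ℝ → ℝ, ContDiff ℝ 1 φ → (∀ t ∉ Ioo (0:ℝ) T, φ t = 0) →
      ∫ t in (0:ℝ)..T, φ t * f t = 0)
    (t₀ : ℝ) (ht₀ : t₀ ∈ Ioo (0:ℝ) T) (hpos : 0 < f t₀) : False := by
  have hU : IsOpen ({t | f t₀ / 2 < f t} ∩ Ioo 0 T) :=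
    (isOpen_lt continuous_const hf).inter isOpen_Ioo
  have ht₀U : t₀ ∈ {t | f t₀ / 2 < f t} ∩ Ioo 0 T := ⟨by simpa using by linarith, ht₀⟩
  obtain ⟨δ, hδ, hball⟩ := Metric.isOpen_iff.1 hU t₀ ht₀U
  have hbump : (0:ℝ) < δ/2 := by linarith
  let bump : ContDiffBump t₀ := ⟨δ/2, δ, hbump, by linarith⟩
  have hsupp : Function.support (fun t => bump t) = Metric.ball t₀ δ := bump.support_eq
  have hφ0 : ∀ t ∉ Ioo (0:ℝ) T, bump t = 0 := by
    intro t ht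
    by_contra hc
    exact ht (hball (hsupp ▸ Function.mem_support.2 hc)).2
  have key := h (fun t => bump t) bump.contDiff hφ0
  have hnn : ∀ t, 0 ≤ bump t * f t := by
    intro t
    rcases eq_or_ne (bump t) 0 with h0 | h0
    · simp [h0]
    · have ht : t ∈ Metric.ball t₀ δ := hsupp ▸ Function.mem_support.2 h0
      have : f t₀ / 2 < f t := (hball ht).1
      exact mul_nonneg bump.nonneg (by linarith)
  have hpos' : 0 < ∫ t in (0:ℝ)..T, bump t * f t := by
    rw [intervalIntegral.integral_of_le hT.le]
    refine (setIntegral_pos_iff_support_of_nonneg_ae ?_ ?_).2 ?_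
    · exact Filter.Eventually.of_forall hnn
    · exact (bump.continuous.mul hf).integrableOn_Ioc
    · refine lt_of_lt_of_le (Metric.measure_ball_pos volume t₀ hbump) ?_
      refine measure_mono fun t ht => ?_
      have htδ : t ∈ Metric.ball t₀ δ := Metric.ball_subset_ball (by linarith) ht
      have h1 : bump t = 1 := bump.one_of_mem_closedBall (Metric.ball_subset_closedBall ht)
      have h2 : f t₀ / 2 < f t := (hball htδ).1
      refine ⟨?_, Ioo_subset_Ioc_self (hball htδ).2⟩
      simp only [Function.mem_support, h1, one_mul]
      exact ne_of_gt (by linarith)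
  rw [key] at hpos'
  exact lt_irrefl _ hpos'

/-- Fundamental lemma of the calculus of variations on `(0,T)`. -/
lemma aux_fund (T : ℝ) (hT : 0 < T) (f : ℝ → ℝ) (hf : Continuous f)
    (h : ∀ φ : ℝ → ℝ, ContDiff ℝ 1 φ → (∀ t ∉ Ioo (0:ℝ) T, φ t = 0) →
      ∫ t in (0:ℝ)..T, φ t * f t = 0) :
    ∀ t ∈ Ioo (0:ℝ) T, f t = 0 := by
  intro t ht
  by_contra hc
  rcases lt_or_gt_of_ne hc with hlt | hgt
  · refine aux_fund_pos T hT (fun s => -f s) hf.neg ?_ t ht (by simpa using neg_pos.mpr hlt)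
    intro φ hφ hφ0
    have := h φ hφ hφ0
    simp only [mul_neg, intervalIntegral.integral_neg, this, neg_zero]
  · exact aux_fund_pos T hT f hf h t ht hgt

/-- Partial derivative in `q` as a directional derivative of the full Hamiltonian. -/
lemma aux_fderiv_partialQ {n : ℕ} (H : ℝ → (Fin n → ℝ) → (Fin n → ℝ) → ℝ)
    (hH : ContDiff ℝ 1 (fun x : ℝ × (Fin n → ℝ) × (Fin n → ℝ) => H x.1 x.2.1 x.2.2))
    (t : ℝ) (x y : Fin n → ℝ) (v : Fin n → ℝ) :
    fderiv ℝ (fun q' => H t q' y) x v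
      = fderiv ℝ (fun x : ℝ × (Fin n → ℝ) × (Fin n → ℝ) => H x.1 x.2.1 x.2.2) (t, x, y)
          (0, v, 0) := by
  have h1 : HasFDerivAt (fun q' : Fin n → ℝ => ((t, q', y) : ℝ × (Fin n → ℝ) × (Fin n → ℝ)))
      ((0 : (Fin n → ℝ) →L[ℝ] ℝ).prod ((ContinuousLinearMap.id ℝ (Fin n → ℝ)).prod 0)) x :=
    HasFDerivAt.prodMk (hasFDerivAt_const t x) (HasFDerivAt.prodMk (hasFDerivAt_id x) (hasFDerivAt_const y x))
  have h2 := ((hH.differentiable one_ne_zero) (t, x, y)).hasFDerivAt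
  have h3 : fderiv ℝ (fun q' => H t q' y) x
      = (fderiv ℝ (fun x : ℝ × (Fin n → ℝ) × (Fin n → ℝ) => H x.1 x.2.1 x.2.2) (t, x, y)).comp
        ((0 : (Fin n → ℝ) →L[ℝ] ℝ).prod ((ContinuousLinearMap.id ℝ (Fin n → ℝ)).prod 0)) :=
    by have := (h2.comp x h1).fderiv; exact this
  rw [h3]; rfl

/-- Partial derivative in `p` as a directional derivative of the full Hamiltonian. -/
lemma aux_fderiv_partialP {n : ℕ} (H : ℝ → (Fin n → ℝ) → (Fin n → ℝ) → ℝ)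
    (hH : ContDiff ℝ 1 (fun x : ℝ × (Fin n → ℝ) × (Fin n → ℝ) => H x.1 x.2.1 x.2.2))
    (t : ℝ) (x y : Fin n → ℝ) (v : Fin n → ℝ) :
    fderiv ℝ (fun p' => H t x p') y v
      = fderiv ℝ (fun x : ℝ × (Fin n → ℝ) × (Fin n → ℝ) => H x.1 x.2.1 x.2.2) (t, x, y)
          (0, 0, v) := by
  have h1 : HasFDerivAt (fun p' : Fin n → ℝ => ((t, x, p') : ℝ × (Fin n → ℝ) × (Fin n → ℝ)))
      ((0 : (Fin n → ℝ) →L[ℝ] ℝ).prod ((0 : (Fin n → ℝ) →L[ℝ] (Fin n → ℝ)).prod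
        (ContinuousLinearMap.id ℝ (Fin n → ℝ)))) y :=
    HasFDerivAt.prodMk (hasFDerivAt_const t y) (HasFDerivAt.prodMk (hasFDerivAt_const x y) (hasFDerivAt_id y))
  have h2 := ((hH.differentiable one_ne_zero) (t, x, y)).hasFDerivAt
  have h3 : fderiv ℝ (fun p' => H t x p') y
      = (fderiv ℝ (fun x : ℝ × (Fin n → ℝ) × (Fin n → ℝ) => H x.1 x.2.1 x.2.2) (t, x, y)).comp
        ((0 : (Fin n → ℝ) →L[ℝ] ℝ).prod ((0 : (Fin n → ℝ) →L[ℝ] (Fin n → ℝ)).prod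
          (ContinuousLinearMap.id ℝ (Fin n → ℝ)))) := by have := (h2.comp y h1).fderiv; exact this
  rw [h3]; rfl

/-- Expansion of a continuous linear functional on the product along coordinates. -/
lemma aux_clm_expand {n : ℕ} (L : (ℝ × (Fin n → ℝ) × (Fin n → ℝ)) →L[ℝ] ℝ) (u v : Fin n → ℝ) :
    L (0, u, v) = (∑ i, u i * L (0, Pi.single i 1, 0)) + ∑ i, v i * L (0, 0, Pi.single i 1) := by
  have hu : ((0:ℝ), u, v)
      = (∑ i, u i • (((0:ℝ), Pi.single i 1, 0) : ℝ × (Fin n → ℝ) × (Fin n → ℝ)))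
        + ∑ i, v i • (((0:ℝ), 0, Pi.single i 1) : ℝ × (Fin n → ℝ) × (Fin n → ℝ)) := by
    refine Prod.ext (by simp [Prod.fst_sum]) (Prod.ext ?_ ?_)
    · simp only [Prod.snd_sum, Prod.fst_sum, Prod.smul_mk, Prod.mk_add_mk, Prod.fst_add,
        Prod.snd_add, smul_zero]
      simp [← Pi.single_smul, Finset.univ_sum_single]
    · simp only [Prod.snd_sum, Prod.smul_mk, Prod.snd_add, smul_zero]
      simp [← Pi.single_smul, Finset.univ_sum_single]
  rw [hu]
  simp only [map_add, map_sum, _root_.map_smul, smul_eq_mul]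

/-- The integrand of the varied action. -/
noncomputable def Faux (n : ℕ) (H : ℝ → (Fin n → ℝ) → (Fin n → ℝ) → ℝ)
    (q p δq δp : ℝ → (Fin n → ℝ)) (ε t : ℝ) : ℝ :=
  (∑ i, (p t i + ε * δp t i) * (deriv q t i + ε * deriv δq t i))
    - H t (q t + ε • δq t) (p t + ε • δp t)

/-- The `ε`-derivative of the integrand of the varied action. -/
noncomputable def Faux' (n : ℕ) (H : ℝ → (Fin n → ℝ) → (Fin n → ℝ) → ℝ)
    (q p δq δp : ℝ → (Fin n → ℝ)) (ε t : ℝ) : ℝ :=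
  (∑ i, (δp t i * (deriv q t i + ε * deriv δq t i) + (p t i + ε * δp t i) * deriv δq t i))
    - (fderiv ℝ (fun x : ℝ × (Fin n → ℝ) × (Fin n → ℝ) => H x.1 x.2.1 x.2.2)
        (t, q t + ε • δq t, p t + ε • δp t)) (0, δq t, δp t)

/-- Differentiation of the action under the integral sign. -/
lemma aux_action_hasDerivAt (n : ℕ) (T : ℝ)
    (H : ℝ → (Fin n → ℝ) → (Fin n → ℝ) → ℝ)
    (hH : ContDiff ℝ 1 (fun x : ℝ × (Fin n → ℝ) × (Fin n → ℝ) => H x.1 x.2.1 x.2.2))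
    (q p δq δp : ℝ → (Fin n → ℝ)) (hq : ContDiff ℝ 1 q) (hp : ContDiff ℝ 1 p)
    (hδq : ContDiff ℝ 1 δq) (hδp : ContDiff ℝ 1 δp) :
    HasDerivAt (fun ε : ℝ =>
        classicalAction n T H (fun t => q t + ε • δq t) (fun t => p t + ε • δp t))
      (∫ t in (0:ℝ)..T, Faux' n H q p δq δp 0 t) 0 := by
  have hcq : Continuous (deriv q) := hq.continuous_deriv le_rfl
  have hcδq : Continuous (deriv δq) := hδq.continuous_deriv le_rfl
  have hbase : Continuous (fun z : ℝ × ℝ =>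
      ((z.2, q z.2 + z.1 • δq z.2, p z.2 + z.1 • δp z.2) : ℝ × (Fin n → ℝ) × (Fin n → ℝ))) :=
    continuous_snd.prodMk
      (((hq.continuous.comp continuous_snd).add
          (continuous_fst.smul (hδq.continuous.comp continuous_snd))).prodMk
        ((hp.continuous.comp continuous_snd).add
          (continuous_fst.smul (hδp.continuous.comp continuous_snd))))
  have hFj : Continuous (fun z : ℝ × ℝ => Faux n H q p δq δp z.1 z.2) := by
    refine Continuous.sub ?_ (hH.continuous.comp hbase)
    refine continuous_finset_sum _ fun i _ => Continuous.mul ?_ ?_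
    · exact ((continuous_apply i).comp (hp.continuous.comp continuous_snd)).add
        (continuous_fst.mul ((continuous_apply i).comp (hδp.continuous.comp continuous_snd)))
    · exact ((continuous_apply i).comp (hcq.comp continuous_snd)).add
        (continuous_fst.mul ((continuous_apply i).comp (hcδq.comp continuous_snd)))
  have hF'j : Continuous (fun z : ℝ × ℝ => Faux' n H q p δq δp z.1 z.2) := by
    refine Continuous.sub ?_ ?_
    · refine continuous_finset_sum _ fun i _ => Continuous.add (Continuous.mul ?_ ?_)
        (Continuous.mul ?_ ?_)
      · exact (continuous_apply i).comp (hδp.continuous.comp continuous_snd)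
      · exact ((continuous_apply i).comp (hcq.comp continuous_snd)).add
          (continuous_fst.mul ((continuous_apply i).comp (hcδq.comp continuous_snd)))
      · exact ((continuous_apply i).comp (hp.continuous.comp continuous_snd)).add
          (continuous_fst.mul ((continuous_apply i).comp (hδp.continuous.comp continuous_snd)))
      · exact (continuous_apply i).comp (hcδq.comp continuous_snd)
    · exact ((hH.continuous_fderiv one_ne_zero).comp hbase).clm_apply
        (continuous_const.prodMk ((hδq.continuous.comp continuous_snd).prodMk
          (hδp.continuous.comp continuous_snd)))
  have hderiv : ∀ (t ε : ℝ),
      HasDerivAt (fun e => Faux n H q p δq δp e t) (Faux' n H q p δq δp ε t) ε := by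
    intro t ε
    have hsum : ∀ i ∈ Finset.univ, HasDerivAt
        (fun e : ℝ => (p t i + e * δp t i) * (deriv q t i + e * deriv δq t i))
        (δp t i * (deriv q t i + ε * deriv δq t i)
          + (p t i + ε * δp t i) * deriv δq t i) ε := by
      intro i _
      have h1 : HasDerivAt (fun e : ℝ => p t i + e * δp t i) (δp t i) ε := by
        simpa using ((hasDerivAt_id ε).mul_const (δp t i)).const_add (p t i)
      have h2 : HasDerivAt (fun e : ℝ => deriv q t i + e * deriv δq t i) (deriv δq t i) ε := by
        simpa using ((hasDerivAt_id ε).mul_const (deriv δq t i)).const_add (deriv q t i)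
      exact h1.mul h2
    have hg : HasDerivAt (fun e : ℝ =>
        ((t, q t + e • δq t, p t + e • δp t) : ℝ × (Fin n → ℝ) × (Fin n → ℝ)))
        (((0:ℝ), δq t, δp t)) ε := by
      refine HasDerivAt.prodMk (hasDerivAt_const ε t) (HasDerivAt.prodMk ?_ ?_)
      · simpa using ((hasDerivAt_id ε).smul_const (δq t)).const_add (q t)
      · simpa using ((hasDerivAt_id ε).smul_const (δp t)).const_add (p t)
    have hHd := (((hH.differentiable one_ne_zero)
        ((t, q t + ε • δq t, p t + ε • δp t)
          : ℝ × (Fin n → ℝ) × (Fin n → ℝ))).hasFDerivAt).comp_hasDerivAt ε hg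
    exact (HasDerivAt.fun_sum hsum).sub hHd
  obtain ⟨C, hC⟩ := ((isCompact_Icc (a := (-1:ℝ)) (b := 1)).prod
    (isCompact_uIcc (a := (0:ℝ)) (b := T))).exists_bound_of_continuousOn hF'j.continuousOn
  have key := intervalIntegral.hasDerivAt_integral_of_dominated_loc_of_deriv_le
    (F := fun ε t => Faux n H q p δq δp ε t) (F' := fun ε t => Faux' n H q p δq δp ε t)
    (x₀ := (0:ℝ)) (a := (0:ℝ)) (b := T) (bound := fun _ => C) (μ := volume) (Metric.ball_mem_nhds (0:ℝ) one_pos)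
    (Filter.Eventually.of_forall fun x =>
      ((hFj.comp (Continuous.prodMk_right x)).aestronglyMeasurable))
    ((hFj.comp (Continuous.prodMk_right 0)).intervalIntegrable _ _)
    ((hF'j.comp (Continuous.prodMk_right 0)).aestronglyMeasurable)
    (Filter.Eventually.of_forall fun t ht x hx => by
      refine hC (x, t) ⟨?_, uIoc_subset_uIcc ht⟩
      have : |x| < 1 := by simpa [Real.dist_eq] using hx
      exact ⟨by linarith [(abs_lt.1 this).1], by linarith [(abs_lt.1 this).2]⟩)
    intervalIntegrable_const
    (Filter.Eventually.of_forall fun t ht x hx => hderiv t x)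
  have hfun : (fun ε : ℝ =>
      classicalAction n T H (fun t => q t + ε • δq t) (fun t => p t + ε • δp t))
      = fun ε => ∫ t in (0:ℝ)..T, Faux n H q p δq δp ε t := by
    funext ε
    unfold classicalAction
    refine intervalIntegral.integral_congr fun t _ => ?_
    have hdq : deriv (fun s => q s + ε • δq s) t = deriv q t + ε • deriv δq t := by
      exact ((hq.differentiable one_ne_zero t).hasDerivAt.add
        (((hδq.differentiable one_ne_zero) t).hasDerivAt.const_smul ε)).deriv
    simp [Faux, hdq]
  rw [hfun]
  exact key.2

end AuxLemmas

/-- Type II d'Alembert variational principle on a vector space.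
For a C¹ curve `(q,p)` with `q(0) = q₀`, the condition `δS[q,p] = ⟨p₁, δq(T)⟩` for all C¹
partial variations `(δq, δp)` with `δq(0) = 0` holds if and only if Hamilton's equations
`q̇ = D_p H`, `ṗ = −D_q H` hold on `(0,T)` together with the natural boundary condition
`p(T) = p₁`. -/
theorem typeII_dAlembert_variational_principle
    (n : ℕ) (T : ℝ) (hT : 0 < T)
    (H : ℝ → (Fin n → ℝ) → (Fin n → ℝ) → ℝ)
    (hH : ContDiff ℝ 1 (fun x : ℝ × (Fin n → ℝ) × (Fin n → ℝ) => H x.1 x.2.1 x.2.2))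
    (q p : ℝ → (Fin n → ℝ)) (hq : ContDiff ℝ 1 q) (hp : ContDiff ℝ 1 p)
    (q₀ p₁ : Fin n → ℝ) (hq0 : q 0 = q₀) :
    (∀ δq δp : ℝ → (Fin n → ℝ), ContDiff ℝ 1 δq → ContDiff ℝ 1 δp → δq 0 = 0 →
        deriv (fun ε : ℝ =>
            classicalAction n T H (fun t => q t + ε • δq t) (fun t => p t + ε • δp t)) 0
          = ∑ i, p₁ i * δq T i)
    ↔ ((∀ t ∈ Ioo (0 : ℝ) T,
          deriv q t = (fun i => fderiv ℝ (fun p' => H t (q t) p') (p t) (Pi.single i 1)) ∧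
          deriv p t = (fun i => -fderiv ℝ (fun q' => H t q' (p t)) (q t) (Pi.single i 1)))
        ∧ p T = p₁) := by
  classical
  set D : ℝ → (ℝ × (Fin n → ℝ) × (Fin n → ℝ)) →L[ℝ] ℝ :=
    fun t => fderiv ℝ (fun x : ℝ × (Fin n → ℝ) × (Fin n → ℝ) => H x.1 x.2.1 x.2.2)
      (t, q t, p t) with hDdef
  have hcD : Continuous D := by
    rw [hDdef]
    exact (hH.continuous_fderiv one_ne_zero).comp
      (continuous_id.prodMk (hq.continuous.prodMk hp.continuous))
  have hne : ∀ᵐ t : ℝ ∂MeasureTheory.volume, t ≠ T := by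
    have hs : {a : ℝ | ¬ a ≠ T} = {T} := by ext a; simp
    rw [MeasureTheory.ae_iff, hs]
    exact Real.volume_singleton
  have hmemIoo : ∀ t ∈ Set.uIoc (0:ℝ) T, t ≠ T → t ∈ Ioo (0:ℝ) T := by
    intro t ht htne
    rw [Set.uIoc_of_le hT.le] at ht
    exact ⟨ht.1, lt_of_le_of_ne ht.2 htne⟩
  have hsum1 : ∀ (c : ℝ) (i : Fin n) (g : Fin n → ℝ),
      ∑ j, (c • (Pi.single i (1:ℝ) : Fin n → ℝ)) j * g j = c * g i := by
    intro c i g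
    rw [Finset.sum_eq_single i]
    · simp
    · intro j _ hj; simp [Pi.single_apply, hj]
    · simp
  have hsum2 : ∀ (c : ℝ) (i : Fin n) (g : Fin n → ℝ),
      ∑ j, g j * (c • (Pi.single i (1:ℝ) : Fin n → ℝ)) j = c * g i := by
    intro c i g
    rw [Finset.sum_eq_single i]
    · simp [mul_comm]
    · intro j _ hj; simp [Pi.single_apply, hj]
    · simp
  have htup : ∀ (c : ℝ) (u v : Fin n → ℝ),
      (((0:ℝ), c • u, c • v) : ℝ × (Fin n → ℝ) × (Fin n → ℝ)) = c • ((0:ℝ), u, v) := by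
    intro c u v
    simp [Prod.smul_mk]
  have hD0 : ∀ δq δp : ℝ → (Fin n → ℝ), ContDiff ℝ 1 δq → ContDiff ℝ 1 δp →
      deriv (fun ε : ℝ =>
        classicalAction n T H (fun t => q t + ε • δq t) (fun t => p t + ε • δp t)) 0
      = ∫ t in (0:ℝ)..T, ((∑ i, (δp t i * deriv q t i + p t i * deriv δq t i))
          - D t (0, δq t, δp t)) := by
    intro δq δp h1 h2
    rw [(aux_action_hasDerivAt n T H hH q p δq δp hq hp h1 h2).deriv]
    refine intervalIntegral.integral_congr fun t _ => ?_
    simp [Faux', hDdef]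
  constructor
  · intro hyp
    have star : ∀ δq δp : ℝ → (Fin n → ℝ), ContDiff ℝ 1 δq → ContDiff ℝ 1 δp → δq 0 = 0 →
        ∫ t in (0:ℝ)..T, ((∑ i, (δp t i * deriv q t i + p t i * deriv δq t i))
          - D t (0, δq t, δp t)) = ∑ i, p₁ i * δq T i := by
      intro δq δp h1 h2 h3
      rw [← hD0 δq δp h1 h2]
      exact hyp δq δp h1 h2 h3
    -- Hamilton equation for q
    have hB : ∀ i : Fin n, ∀ t ∈ Ioo (0:ℝ) T,
        deriv q t i - D t (0, 0, Pi.single i 1) = 0 := by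
      intro i
      refine aux_fund T hT _ ?_ ?_
      · exact ((continuous_apply i).comp (hq.continuous_deriv le_rfl)).sub
          (hcD.clm_apply continuous_const)
      · intro φ hφ hφ0
        have h := star (fun _ => 0) (fun t => φ t • (Pi.single i (1:ℝ) : Fin n → ℝ))
          contDiff_const (hφ.smul contDiff_const) rfl
        have hR : (∑ j, p₁ j * ((fun _ : ℝ => (0 : Fin n → ℝ)) T) j) = 0 := by simp
        rw [hR] at h
        refine Eq.trans ?_ h
        refine intervalIntegral.integral_congr fun t _ => ?_
        have e1 : deriv (fun _ : ℝ => (0 : Fin n → ℝ)) t = 0 := deriv_const _ _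
        have e2 : (((0:ℝ), (0 : Fin n → ℝ), φ t • (Pi.single i (1:ℝ) : Fin n → ℝ))
            : ℝ × (Fin n → ℝ) × (Fin n → ℝ))
            = φ t • (((0:ℝ), (0 : Fin n → ℝ), Pi.single i (1:ℝ))
              : ℝ × (Fin n → ℝ) × (Fin n → ℝ)) := by
          rw [← htup]; simp
        simp only [e1, Pi.zero_apply, mul_zero, add_zero, e2, _root_.map_smul, smul_eq_mul,
          hsum1 (φ t) i (deriv q t)]
        ring
    have hqeq : ∀ t ∈ Ioo (0:ℝ) T, ∀ i, deriv q t i = D t (0, 0, Pi.single i 1) := by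
      intro t ht i
      have := hB i t ht
      linarith
    -- Hamilton equation for p
    have hA : ∀ i : Fin n, ∀ t ∈ Ioo (0:ℝ) T,
        -(deriv p t i) - D t (0, Pi.single i 1, 0) = 0 := by
      intro i
      refine aux_fund T hT _ ?_ ?_
      · exact (((continuous_apply i).comp (hp.continuous_deriv le_rfl)).neg).sub
          (hcD.clm_apply continuous_const)
      · intro φ hφ hφ0
        have hφzero : φ 0 = 0 := hφ0 0 (fun hc => lt_irrefl _ hc.1)
        have hφT : φ T = 0 := hφ0 T (fun hc => lt_irrefl _ hc.2)
        have hδq1 : ContDiff ℝ 1 (fun t => φ t • (Pi.single i (1:ℝ) : Fin n → ℝ)) :=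
          hφ.smul contDiff_const
        have h := star (fun t => φ t • (Pi.single i (1:ℝ) : Fin n → ℝ)) (fun _ => 0) hδq1
          contDiff_const (by simp [hφzero])
        have hR : (∑ j, p₁ j
            * ((fun t : ℝ => φ t • (Pi.single i (1:ℝ) : Fin n → ℝ)) T) j) = 0 := by
          simp [hφT]
        rw [hR] at h
        have hdδq : ∀ t, deriv (fun s => φ s • (Pi.single i (1:ℝ) : Fin n → ℝ)) t
            = deriv φ t • (Pi.single i (1:ℝ) : Fin n → ℝ) :=
          fun t => ((hφ.differentiable one_ne_zero t).hasDerivAt.smul_const _).deriv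
        have h2 : ∫ t in (0:ℝ)..T,
            (deriv φ t * p t i - φ t * D t (0, Pi.single i 1, 0)) = 0 := by
          refine Eq.trans ?_ h
          refine intervalIntegral.integral_congr fun t _ => ?_
          have e2 : (((0:ℝ), φ t • (Pi.single i (1:ℝ) : Fin n → ℝ), (0 : Fin n → ℝ))
              : ℝ × (Fin n → ℝ) × (Fin n → ℝ))
              = φ t • (((0:ℝ), Pi.single i (1:ℝ), (0 : Fin n → ℝ))
                : ℝ × (Fin n → ℝ) × (Fin n → ℝ)) := by
            rw [← htup]; simp
          simp only [hdδq, Pi.zero_apply, zero_mul, zero_add, e2, _root_.map_smul,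
            smul_eq_mul, hsum2 (deriv φ t) i (p t)]
        have hχ : ContDiff ℝ 1 (fun t => p t i) :=
          ContDiff.comp (ContinuousLinearMap.proj i : (Fin n → ℝ) →L[ℝ] ℝ).contDiff hp
        have h3 : ∫ t in (0:ℝ)..T, (deriv φ t * p t i + φ t * deriv p t i) = 0 := by
          have hftc := aux_ftc_mul T φ (fun t => p t i) hφ hχ
          rw [hφT, hφzero] at hftc
          simp only [zero_mul, sub_zero] at hftc
          refine Eq.trans ?_ hftc
          refine intervalIntegral.integral_congr fun t _ => ?_
          rw [(aux_hasDerivAt_eval p (hp.differentiable one_ne_zero) t i).deriv]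
        have hi1 : IntervalIntegrable (fun t => deriv φ t * p t i)
            MeasureTheory.volume 0 T :=
          ((hφ.continuous_deriv le_rfl).mul
            ((continuous_apply i).comp hp.continuous)).intervalIntegrable _ _
        have hi2 : IntervalIntegrable (fun t => φ t * deriv p t i)
            MeasureTheory.volume 0 T :=
          (hφ.continuous.mul
            ((continuous_apply i).comp (hp.continuous_deriv le_rfl))).intervalIntegrable _ _
        have hi3 : IntervalIntegrable (fun t => φ t * D t (0, Pi.single i 1, 0))
            MeasureTheory.volume 0 T :=
          (hφ.continuous.mul (hcD.clm_apply continuous_const)).intervalIntegrable _ _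
        have heq : (fun t => φ t * (-(deriv p t i) - D t (0, Pi.single i 1, 0)))
            = fun t => (deriv φ t * p t i - φ t * D t (0, Pi.single i 1, 0))
              - (deriv φ t * p t i + φ t * deriv p t i) := by
          funext t; ring
        rw [heq, intervalIntegral.integral_sub (hi1.sub hi3) (hi1.add hi2), h2, h3, sub_zero]
    have hpeq : ∀ t ∈ Ioo (0:ℝ) T, ∀ i, deriv p t i = -(D t (0, Pi.single i 1, 0)) := by
      intro t ht i
      have := hA i t ht
      linarith
    -- terminal momentum
    have hpT : p T = p₁ := by
      funext i
      have hδq1 : ContDiff ℝ 1 (fun t : ℝ => (t / T) • (Pi.single i (1:ℝ) : Fin n → ℝ)) :=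
        (contDiff_id.div_const T).smul contDiff_const
      have h := star (fun t => (t / T) • (Pi.single i (1:ℝ) : Fin n → ℝ)) (fun _ => 0) hδq1
        contDiff_const (by simp)
      have hR : (∑ j, p₁ j
          * ((fun t : ℝ => (t / T) • (Pi.single i (1:ℝ) : Fin n → ℝ)) T) j) = p₁ i := by
        show ∑ j, p₁ j * ((T / T) • (Pi.single i (1:ℝ) : Fin n → ℝ)) j = p₁ i
        rw [hsum2 (T / T) i p₁, div_self hT.ne', one_mul]
      rw [hR] at h
      have hdδq : ∀ t : ℝ, deriv (fun s : ℝ => (s / T) • (Pi.single i (1:ℝ) : Fin n → ℝ)) t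
          = (1 / T) • (Pi.single i (1:ℝ) : Fin n → ℝ) := by
        intro t
        have hdiv : HasDerivAt (fun s : ℝ => s / T) (1 / T) t := (hasDerivAt_id t).div_const T
        exact (hdiv.smul_const _).deriv
      have key : ∫ t in (0:ℝ)..T,
          ((1 / T) * p t i - (t / T) * D t (0, Pi.single i 1, 0)) = p₁ i := by
        refine Eq.trans ?_ h
        refine intervalIntegral.integral_congr fun t _ => ?_
        have e2 : (((0:ℝ), (t / T) • (Pi.single i (1:ℝ) : Fin n → ℝ), (0 : Fin n → ℝ))
            : ℝ × (Fin n → ℝ) × (Fin n → ℝ))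
            = (t / T) • (((0:ℝ), Pi.single i (1:ℝ), (0 : Fin n → ℝ))
              : ℝ × (Fin n → ℝ) × (Fin n → ℝ)) := by
          rw [← htup]; simp
        simp only [hdδq, Pi.zero_apply, zero_mul, zero_add, e2, _root_.map_smul,
          smul_eq_mul, hsum2 ((1:ℝ) / T) i (p t)]
      have hae : ∀ᵐ t ∂MeasureTheory.volume, t ∈ Set.uIoc (0:ℝ) T →
          ((1 / T) * p t i - (t / T) * D t (0, Pi.single i 1, 0))
          = (deriv (fun s : ℝ => s / T) t * p t i
              + (fun s : ℝ => s / T) t * deriv (fun s => p s i) t) := by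
        filter_upwards [hne] with t htne hmem
        have ht : t ∈ Ioo (0:ℝ) T := hmemIoo t hmem htne
        have hDval : D t (0, Pi.single i 1, 0) = -(deriv p t i) := by
          have := hA i t ht; linarith
        have hdiv : HasDerivAt (fun s : ℝ => s / T) (1 / T) t := (hasDerivAt_id t).div_const T
        rw [hDval, hdiv.deriv, (aux_hasDerivAt_eval p (hp.differentiable one_ne_zero) t i).deriv]
        ring
      rw [intervalIntegral.integral_congr_ae hae,
        aux_ftc_mul T (fun s : ℝ => s / T) (fun t => p t i)
          (contDiff_id.div_const T)
          (ContDiff.comp (ContinuousLinearMap.proj i : (Fin n → ℝ) →L[ℝ] ℝ).contDiff hp)]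
        at key
      rw [← key]
      simp [div_self hT.ne']
    refine ⟨fun t ht => ⟨?_, ?_⟩, hpT⟩
    · funext i
      rw [aux_fderiv_partialP H hH t (q t) (p t)]
      exact hqeq t ht i
    · funext i
      rw [aux_fderiv_partialQ H hH t (q t) (p t)]
      have h1 := hpeq t ht i
      have h2 : D t (0, Pi.single i 1, 0)
          = fderiv ℝ (fun x : ℝ × (Fin n → ℝ) × (Fin n → ℝ) => H x.1 x.2.1 x.2.2)
            (t, q t, p t) (0, Pi.single i 1, 0) := by rw [hDdef]
      rw [← h2, h1]
  · rintro ⟨hham, hpT⟩ δq δp hδq hδp h0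
    rw [hD0 δq δp hδq hδp]
    have hham' : ∀ t ∈ Ioo (0:ℝ) T, D t (0, δq t, δp t)
        = (∑ i, δq t i * (-(deriv p t i))) + ∑ i, δp t i * deriv q t i := by
      intro t ht
      obtain ⟨h1, h2⟩ := hham t ht
      rw [show D t ((0:ℝ), δq t, δp t)
          = (∑ i, δq t i * D t (0, Pi.single i 1, 0))
            + ∑ i, δp t i * D t (0, 0, Pi.single i 1) from aux_clm_expand (D t) (δq t) (δp t)]
      congr 1
      · refine Finset.sum_congr rfl fun i _ => ?_
        have := congrFun h2 i
        rw [aux_fderiv_partialQ H hH t (q t) (p t)] at this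
        have hDv : D t (0, Pi.single i 1, 0)
            = fderiv ℝ (fun x : ℝ × (Fin n → ℝ) × (Fin n → ℝ) => H x.1 x.2.1 x.2.2)
              (t, q t, p t) (0, Pi.single i 1, 0) := by rw [hDdef]
        rw [hDv, this, neg_neg]
      · refine Finset.sum_congr rfl fun i _ => ?_
        have := congrFun h1 i
        rw [aux_fderiv_partialP H hH t (q t) (p t)] at this
        have hDv : D t (0, 0, Pi.single i 1)
            = fderiv ℝ (fun x : ℝ × (Fin n → ℝ) × (Fin n → ℝ) => H x.1 x.2.1 x.2.2)
              (t, q t, p t) (0, 0, Pi.single i 1) := by rw [hDdef]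
        rw [hDv, ← this]
    have hcongr : ∀ᵐ t ∂MeasureTheory.volume, t ∈ Set.uIoc (0:ℝ) T →
        ((∑ i, (δp t i * deriv q t i + p t i * deriv δq t i)) - D t (0, δq t, δp t))
        = ∑ i, (deriv p t i * δq t i + p t i * deriv δq t i) := by
      filter_upwards [hne] with t htne hmem
      have ht : t ∈ Ioo (0:ℝ) T := hmemIoo t hmem htne
      rw [hham' t ht, Finset.sum_add_distrib, Finset.sum_add_distrib]
      have e1 : ∑ i, δq t i * (-(deriv p t i)) = -∑ i, deriv p t i * δq t i := by
        rw [← Finset.sum_neg_distrib]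
        exact Finset.sum_congr rfl fun i _ => by ring
      rw [e1]
      ring
    rw [intervalIntegral.integral_congr_ae hcongr, aux_ftc_pair T p δq hp hδq, hpT, h0]
    simp
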